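/- Let Λ>0, K∈(0,1/3], ε∈ℝ, C₀>1, and define E(t) = ((C₀ − t^{3(1+ε²K)})/(C₀ − 1))^{2/(3(1+ε²K))} and Ω(t) = 2t^{3(1+ε²K)}/(t^{3(1+ε²K)} − C₀) for t∈(0,1]. Then E satisfies the ODE ∂ₜE(t) = (1/t)·E(t)·Ω(t) on (0,1], E(1)=1, and E(t) ≥ 1 for all t∈(0,1]. -/
import Mathlib


/-- The modified scale factor `E(t) = ((C₀ - t^(3(1+ε²K)))/(C₀-1))^(2/(3(1+ε²K)))` satisfies
`∂ₜE = (1/t)·E·Ω` on `(0,1]`, `E(1) = 1`, and `E ≥ 1` on `(0,1]`, where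
`Ω(t) = 2 t^(3(1+ε²K))/(t^(3(1+ε²K)) - C₀)`. -/
theorem stmt_2 (Λ K ε C₀ : ℝ) (hΛ : 0 < Λ) (hK : 0 < K) (hK' : K ≤ 1/3) (hC₀ : 1 < C₀)
    (E Ω : ℝ → ℝ)
    (hE : ∀ t : ℝ, E t = ((C₀ - t ^ (3 * (1 + ε ^ 2 * K))) / (C₀ - 1)) ^
        (2 / (3 * (1 + ε ^ 2 * K))))
    (hΩ : ∀ t : ℝ, Ω t = 2 * t ^ (3 * (1 + ε ^ 2 * K)) / (t ^ (3 * (1 + ε ^ 2 * K)) - C₀)) :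
    (∀ t ∈ Set.Ioc (0:ℝ) 1, HasDerivAt E ((1 / t) * E t * Ω t) t) ∧
      E 1 = 1 ∧ ∀ t ∈ Set.Ioc (0:ℝ) 1, 1 ≤ E t := by
  set p : ℝ := 3 * (1 + ε ^ 2 * K) with hp_def
  have hp : 0 < p := by positivity
  have hC1 : (0:ℝ) < C₀ - 1 := by linarith
  -- basic facts for t ∈ (0,1]
  have key : ∀ t ∈ Set.Ioc (0:ℝ) 1,
      0 < t ∧ t ^ p ≤ 1 ∧ 0 < C₀ - t ^ p ∧ 1 ≤ (C₀ - t ^ p) / (C₀ - 1) := by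
    intro t ht
    obtain ⟨ht0, ht1⟩ := ht
    have hs1 : t ^ p ≤ 1 := Real.rpow_le_one ht0.le ht1 hp.le
    have hCs : 0 < C₀ - t ^ p := by linarith
    refine ⟨ht0, hs1, hCs, ?_⟩
    rw [le_div_iff₀ hC1]
    linarith
  refine ⟨?_, ?_, ?_⟩
  · intro t ht
    obtain ⟨ht0, hs1, hCs, hb1⟩ := key t ht
    have hs0 : 0 < t ^ p := Real.rpow_pos_of_pos ht0 p
    have hb0 : 0 < (C₀ - t ^ p) / (C₀ - 1) := by positivity
    -- derivative of t ↦ t^p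
    have h1 : HasDerivAt (fun x : ℝ => x ^ p) (p * t ^ (p - 1)) t :=
      Real.hasDerivAt_rpow_const (Or.inl (ne_of_gt ht0))
    have h2 : HasDerivAt (fun x : ℝ => (C₀ - x ^ p) / (C₀ - 1))
        (-(p * t ^ (p - 1)) / (C₀ - 1)) t := ((h1.const_sub C₀).div_const (C₀ - 1))
    have h3 : HasDerivAt (fun x : ℝ => ((C₀ - x ^ p) / (C₀ - 1)) ^ (2 / p))
        (-(p * t ^ (p - 1)) / (C₀ - 1) * (2 / p) * ((C₀ - t ^ p) / (C₀ - 1)) ^ (2 / p - 1))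
        t := h2.rpow_const (Or.inl (ne_of_gt hb0))
    have hEe : E = fun x : ℝ => ((C₀ - x ^ p) / (C₀ - 1)) ^ (2 / p) := funext hE
    rw [hEe]
    convert h3 using 1
    have e1 : ((C₀ - t ^ p) / (C₀ - 1)) ^ (2 / p - 1)
        = ((C₀ - t ^ p) / (C₀ - 1)) ^ (2 / p) / ((C₀ - t ^ p) / (C₀ - 1)) := by
      rw [Real.rpow_sub hb0, Real.rpow_one]
    have e2 : t ^ (p - 1) = t ^ p / t := by
      rw [Real.rpow_sub ht0, Real.rpow_one]
    have hsC : t ^ p - C₀ ≠ 0 := by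
      intro h; apply absurd hCs; rw [show C₀ - t ^ p = -(t ^ p - C₀) by ring, h]; simp
    simp only [hΩ, e1, e2]
    field_simp
    ring
  · rw [hE]
    rw [Real.one_rpow, div_self hC1.ne', Real.one_rpow]
  · intro t ht
    obtain ⟨ht0, hs1, hCs, hb1⟩ := key t ht
    rw [hE]
    calc (1:ℝ) = 1 ^ (2 / p) := (Real.one_rpow _).symm
    _ ≤ ((C₀ - t ^ p) / (C₀ - 1)) ^ (2 / p) :=
        Real.rpow_le_rpow zero_le_one hb1 (by positivity)
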